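/- Let N = [[0, κ e₁ᵀ], [Re₁, -a_T R⌊e₁⌋]] be the 4×4 matrix with R ∈ SO(3), κ = ‖z_fix × (v̇ - g)‖, a_T ∈ ℝ, e₁ = (1,0,0)ᵀ. Then det(N) = -a_T² κ. In particular N is invertible iff a_T ≠ 0 and z_fix × (v̇ - g) ≠ 0. -/

import Mathlib

open Matrix Real

noncomputable def norm3 (v : Fin 3 → ℝ) : ℝ := Real.sqrt (v ⬝ᵥ v)

def skew (a : Fin 3 → ℝ) : Matrix (Fin 3) (Fin 3) ℝ :=
  !![0, -a 2, a 1; a 2, 0, -a 0; -a 1, a 0, 0]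

def e1 : Fin 3 → ℝ := ![1, 0, 0]

lemma norm3_eq_zero_iff (w : Fin 3 → ℝ) : norm3 w = 0 ↔ w = 0 := by
  unfold norm3
  rw [Real.sqrt_eq_zero']
  constructor
  · intro h
    have this : w 0 * w 0 + w 1 * w 1 + w 2 * w 2 ≤ 0 := by
      simpa [dotProduct, Fin.sum_univ_three] using h
    funext i
    fin_cases i <;> simp <;> nlinarith [sq_nonneg (w 0), sq_nonneg (w 1), sq_nonneg (w 2)]
  · intro h; subst h; simp [dotProduct]

lemma norm3_nonneg (w : Fin 3 → ℝ) : 0 ≤ norm3 w := Real.sqrt_nonneg _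

/-- Theorem 3 of the paper: for the zero-airspeed singularity
case, `N = [[0, κ e₁ᵀ], [Re₁, -a_T R⌊e₁⌋]]` with `κ = ‖z_fix × (v̇ - g)‖`
satisfies `det N = -a_T² κ`; in particular `N` is invertible iff `a_T ≠ 0`
and `z_fix × (v̇ - g) ≠ 0`. -/
theorem det_N_zero_airspeed (R : Matrix (Fin 3) (Fin 3) ℝ)
    (hR : Rᵀ * R = 1) (hRdet : R.det = 1)
    (aT : ℝ) (zfix vdot g : Fin 3 → ℝ)
    (κ : ℝ) (hκ : κ = norm3 (zfix ⨯₃ (vdot - g)))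
    (N : Matrix (Fin 1 ⊕ Fin 3) (Fin 1 ⊕ Fin 3) ℝ)
    (hN : N = Matrix.fromBlocks 0
      (Matrix.of fun _ j => κ * e1 j)
      (Matrix.of fun i _ => (R *ᵥ e1) i)
      (-aT • (R * skew e1))) :
    N.det = -aT ^ 2 * κ ∧
      (N.det ≠ 0 ↔ aT ≠ 0 ∧ zfix ⨯₃ (vdot - g) ≠ 0) := by
  have hdet : N.det = -aT ^ 2 * κ := by
    have h1 : N.det = (Matrix.reindex finSumFinEquiv finSumFinEquiv N).det :=
      (Matrix.det_reindex_self _ _).symm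
    rw [Matrix.det_fin_three] at hRdet
    subst hN
    rw [h1]
    simp [Matrix.det_succ_row_zero, Fin.sum_univ_succ,
      Matrix.reindex_apply, Matrix.fromBlocks, finSumFinEquiv, Fin.cases,
      Matrix.mulVec, Matrix.mul_apply, dotProduct, Fin.sum_univ_three, e1, skew,
      Matrix.smul_apply, Fin.addCases, Fin.subNat, Fin.succAbove, Fin.castSucc, Fin.castAdd, Fin.castLE, Sum.elim_inl, Sum.elim_inr]
    ring_nf
    ring_nf at hRdet
    linear_combination (aT ^ 2 * κ) * hRdet
  refine ⟨hdet, ?_⟩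
  rw [hdet]
  constructor
  · intro h
    constructor
    · intro ha; apply h; rw [ha]; ring
    · intro hc; apply h; rw [hκ, hc]
      simp [(norm3_eq_zero_iff 0).mpr rfl]
  · rintro ⟨ha, hc⟩
    have hκne : κ ≠ 0 := by
      rw [hκ]; intro h; exact hc ((norm3_eq_zero_iff _).mp h)
    intro h
    apply hκne
    have haT : aT ^ 2 ≠ 0 := pow_ne_zero 2 ha
    have : -aT ^ 2 * κ = 0 := h
    have : aT ^ 2 * κ = 0 := by linarith
    rcases mul_eq_zero.mp this with h' | h'
    · exact absurd h' haT
    · exact h'
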